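/- Fix constants $1 \le r \le p \le \beta \le \infty$ with $r < p$ (or $r \le p$ and $r < \infty$), let $q$ be given by $1/p - 1/q = 1/\beta$, and let $\omega$ be a weight on $\mathbb{R}^n$. If there is $C$ such that $\|(\mathbf{A}_{\beta, r, Q} f)\,\omega\|_q \le C\|f\omega\|_p$ for all functions $f$ and all cubes $Q$ (where $\mathbf{A}_{\beta, r, Q} f = \chi_Q |Q|^{1/\beta - 1/r}\|f\chi_Q\|_r$), then $\omega$ satisfies $\|\omega\chi_Q\|_q \, \|\omega^{-1}\chi_Q\|_{\frac{pr}{p-r}} \le C' |Q|^{\frac{\beta - r}{\beta r}}$ uniformly over cubes $Q$. -/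

import Mathlib

open MeasureTheory Set ENNReal

/-- The axis-parallel cube in `ℝⁿ` with center `c` and side length `ℓ`. -/
def cube (n : ℕ) (c : Fin n → ℝ) (ℓ : ℝ) : Set (Fin n → ℝ) :=
  {x | ∀ i, |x i - c i| ≤ ℓ / 2}

lemma cube_eq (n : ℕ) (c : Fin n → ℝ) (ℓ : ℝ) :
    cube n c ℓ = Set.pi univ (fun i => Icc (c i - ℓ/2) (c i + ℓ/2)) := by
  ext x
  simp only [cube, mem_setOf_eq, mem_pi, mem_univ, forall_true_left, mem_Icc, abs_le]
  constructor
  · intro h i; have := h i; constructor <;> linarith [this.1, this.2]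
  · intro h i; have := h i; constructor <;> linarith [this.1, this.2]

lemma measurableSet_cube (n : ℕ) (c : Fin n → ℝ) (ℓ : ℝ) : MeasurableSet (cube n c ℓ) := by
  rw [cube_eq]
  exact MeasurableSet.pi countable_univ fun i _ => measurableSet_Icc

lemma volume_cube (n : ℕ) (c : Fin n → ℝ) (ℓ : ℝ) :
    volume (cube n c ℓ) = ENNReal.ofReal ℓ ^ n := by
  rw [cube_eq, volume_pi_pi]
  have : ∀ i : Fin n, volume (Icc (c i - ℓ/2) (c i + ℓ/2)) = ENNReal.ofReal ℓ := by
    intro i; rw [Real.volume_Icc]; ring_nf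
  simp [this, Finset.prod_const]

lemma volume_cube_pos (n : ℕ) (c : Fin n → ℝ) (ℓ : ℝ) (hℓ : 0 < ℓ) :
    0 < volume (cube n c ℓ) := by
  rw [volume_cube n c ℓ]
  exact ENNReal.pow_pos (ENNReal.ofReal_pos.2 hℓ) n

lemma volume_cube_lt_top (n : ℕ) (c : Fin n → ℝ) (ℓ : ℝ) :
    volume (cube n c ℓ) < ∞ := by
  rw [volume_cube n c ℓ]
  exact ENNReal.pow_lt_top ofReal_lt_top

lemma aux_eLpNorm_ofReal_eq {α : Type*} [MeasurableSpace α] (μ : Measure α)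
    (s : ℝ) (hs : 0 < s) (g : α → ℝ) (hg : ∀ x, 0 ≤ g x) :
    eLpNorm g (ENNReal.ofReal s) μ = (∫⁻ x, ENNReal.ofReal (g x) ^ s ∂μ) ^ (1/s) := by
  rw [eLpNorm_eq_lintegral_rpow_enorm_toReal (by simpa using hs.not_ge) ENNReal.ofReal_ne_top,
    ENNReal.toReal_ofReal hs.le]
  congr 1
  apply lintegral_congr
  intro x
  rw [Real.enorm_eq_ofReal (hg x)]

lemma aux_iSup_rpow (f : ℕ → ℝ≥0∞) (s : ℝ) (hs : 0 < s) :
    (⨆ N, f N) ^ s = ⨆ N, f N ^ s :=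
  ((ENNReal.orderIsoRpow s hs).map_iSup f).symm ▸ rfl

lemma aux_iSup_min (v : ℝ) (τ : ℝ) (hτ : 0 ≤ τ) :
    ⨆ N : ℕ, ENNReal.ofReal (min v N) ^ τ = ENNReal.ofReal v ^ τ := by
  refine le_antisymm (iSup_le fun N => ENNReal.rpow_le_rpow
    (ENNReal.ofReal_le_ofReal (min_le_left _ _)) hτ) ?_
  refine le_iSup_of_le ⌈v⌉₊ ?_
  rw [min_eq_left (Nat.le_ceil v)]

lemma aux_cancel {A X W C2 : ℝ≥0∞} {e1 e2 : ℝ} (hA0 : A ≠ 0) (hAt : A ≠ ∞)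
    (hX0 : X ≠ 0) (hXt : X ≠ ∞)
    (H : A ^ e1 * (A ^ e2)⁻¹ * X * W ≤ C2 * X) : W ≤ C2 * A ^ (e2 - e1) := by
  have h1 : A ^ e1 * (A ^ e2)⁻¹ * W ≤ C2 := by
    rw [← ENNReal.mul_le_mul_iff_left hX0 hXt]
    calc A ^ e1 * (A ^ e2)⁻¹ * W * X = A ^ e1 * (A ^ e2)⁻¹ * X * W := by ring
      _ ≤ C2 * X := H
  have h2 := mul_le_mul_left h1 (A ^ (e2 - e1))
  have hone : A ^ e1 * (A ^ e2)⁻¹ * A ^ (e2 - e1) = 1 := by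
    rw [← ENNReal.rpow_neg, ← ENNReal.rpow_add _ _ hA0 hAt, ← ENNReal.rpow_add _ _ hA0 hAt,
      show e1 + -e2 + (e2 - e1) = 0 by ring, ENNReal.rpow_zero]
  calc W = A ^ e1 * (A ^ e2)⁻¹ * A ^ (e2 - e1) * W := by rw [hone, one_mul]
    _ = A ^ e1 * (A ^ e2)⁻¹ * W * A ^ (e2 - e1) := by ring
    _ ≤ C2 * A ^ (e2 - e1) := h2

/-- Constant-exponent case of Proposition 3.2(1) (necessity).
Exponents: `1 ≤ r ≤ p ≤ β ≤ ∞` with `1/p = 1/q + 1/β`; `t = pr/(p-r)` is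
encoded by `1/r = 1/p + 1/t` and `u = βr/(β-r)` by `1/r = 1/β + 1/u`.
If `‖(A_{β,r,Q} f) ω‖_q ≤ C ‖fω‖_p` for all `f` and cubes `Q`, where
`A_{β,r,Q} f = χ_Q |Q|^{1/β - 1/r} ‖fχ_Q‖_r` (so that its weighted norm equals
`|Q|^{1/β} |Q|^{-1/r} ‖fχ_Q‖_r ‖ωχ_Q‖_q`), then
`‖ωχ_Q‖_q ‖ω⁻¹χ_Q‖_t ≤ C' |Q|^{1/u}` uniformly over cubes. -/
theorem stmt16 (n : ℕ) (r p : ℝ) (hr : 1 ≤ r) (hrp : r ≤ p)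
    (β q t u : ℝ≥0∞)
    (hpβ : ENNReal.ofReal p ≤ β)
    (hpq : 1 / ENNReal.ofReal p = 1 / q + 1 / β)
    (ht : 1 / ENNReal.ofReal r = 1 / ENNReal.ofReal p + 1 / t)
    (hu : 1 / ENNReal.ofReal r = 1 / β + 1 / u)
    (ω : (Fin n → ℝ) → ℝ) (hω : Measurable ω) (hωpos : ∀ x, 0 < ω x)
    (C : ℝ)
    (h : ∀ (c : Fin n → ℝ) (ℓ : ℝ), 0 < ℓ →
      ∀ f : (Fin n → ℝ) → ℝ, Measurable f →
        volume (cube n c ℓ) ^ (1 / β).toReal *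
          (volume (cube n c ℓ) ^ (1 / r))⁻¹ *
          eLpNorm ((cube n c ℓ).indicator f) (ENNReal.ofReal r) volume *
          eLpNorm ((cube n c ℓ).indicator ω) q volume ≤
        ENNReal.ofReal C * eLpNorm (fun x => f x * ω x) (ENNReal.ofReal p) volume) :
    ∃ C' : ℝ, ∀ (c : Fin n → ℝ) (ℓ : ℝ), 0 < ℓ →
      eLpNorm ((cube n c ℓ).indicator ω) q volume *
        eLpNorm ((cube n c ℓ).indicator fun x => (ω x)⁻¹) t volume ≤
      ENNReal.ofReal C' * volume (cube n c ℓ) ^ (1 / u).toReal := by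
  classical
  have hr0 : (0:ℝ) < r := one_pos.trans_le hr
  have hp0 : (0:ℝ) < p := hr0.trans_le hrp
  have hRpos : (0:ℝ≥0∞) < ENNReal.ofReal r := ENNReal.ofReal_pos.2 hr0
  have hPpos : (0:ℝ≥0∞) < ENNReal.ofReal p := ENNReal.ofReal_pos.2 hp0
  have hRinvfin : 1 / ENNReal.ofReal r ≠ ∞ := by
    simp only [one_div, ENNReal.inv_ne_top]; exact hRpos.ne'
  have hPinvfin : 1 / ENNReal.ofReal p ≠ ∞ := by
    simp only [one_div, ENNReal.inv_ne_top]; exact hPpos.ne'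
  have hRinv : (1 / ENNReal.ofReal r).toReal = 1 / r := by
    rw [one_div, ENNReal.toReal_inv, ENNReal.toReal_ofReal hr0.le, one_div]
  have hPinv : (1 / ENNReal.ofReal p).toReal = 1 / p := by
    rw [one_div, ENNReal.toReal_inv, ENNReal.toReal_ofReal hp0.le, one_div]
  have hβfin : 1 / β ≠ ∞ := by
    refine ne_top_of_le_ne_top hRinvfin ?_
    rw [hu]; exact le_self_add
  have hufin : 1 / u ≠ ∞ := by
    refine ne_top_of_le_ne_top hRinvfin ?_
    rw [hu]; exact le_add_self
  have htfin' : 1 / t ≠ ∞ := by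
    refine ne_top_of_le_ne_top hRinvfin ?_
    rw [ht]; exact le_add_self
  have hU : (1 / u).toReal = 1 / r - (1 / β).toReal := by
    have h1 := congrArg ENNReal.toReal hu
    rw [ENNReal.toReal_add hβfin hufin, hRinv] at h1
    linarith
  have hT : (1 / t).toReal = 1 / r - 1 / p := by
    have h1 := congrArg ENNReal.toReal ht
    rw [ENNReal.toReal_add hPinvfin htfin', hRinv, hPinv] at h1
    linarith
  refine ⟨C, fun c ℓ hℓ => ?_⟩
  have hQm : MeasurableSet (cube n c ℓ) := measurableSet_cube n c ℓ
  set Q := cube n c ℓ with hQdef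
  set μ := volume.restrict Q with hμdef
  set A := volume Q with hAdef
  have hApos : A ≠ 0 := (volume_cube_pos n c ℓ hℓ).ne'
  have hAtop : A ≠ ∞ := (volume_cube_lt_top n c ℓ).ne
  have hμuniv : μ univ = A := by rw [hμdef, Measure.restrict_apply_univ]
  rw [eLpNorm_indicator_eq_eLpNorm_restrict hQm, eLpNorm_indicator_eq_eLpNorm_restrict hQm]
  set W := eLpNorm ω q μ with hWdef
  rcases eq_or_ne W 0 with hW0 | hW0
  · rw [hW0, zero_mul]; exact zero_le
  -- the key testing inequality
  have key : ∀ g : (Fin n → ℝ) → ℝ, Measurable g →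
      A ^ (1 / β).toReal * (A ^ (1 / r))⁻¹ * eLpNorm g (ENNReal.ofReal r) μ * W ≤
        ENNReal.ofReal C * eLpNorm (fun x => g x * ω x) (ENNReal.ofReal p) μ := by
    intro g hg
    have H := h c ℓ hℓ (Q.indicator g) (hg.indicator hQm)
    have e1 : (fun x => Q.indicator g x * ω x) = Q.indicator fun x => g x * ω x := by
      funext x; rw [Set.indicator_mul_left]
    rw [Set.indicator_indicator, inter_self, e1,
      eLpNorm_indicator_eq_eLpNorm_restrict hQm, eLpNorm_indicator_eq_eLpNorm_restrict hQm,
      eLpNorm_indicator_eq_eLpNorm_restrict hQm] at H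
    exact H
  have ha1 : A ^ (1 / β).toReal ≠ 0 :=
    (ENNReal.rpow_pos (pos_iff_ne_zero.2 hApos) hAtop).ne'
  have ha1' : A ^ (1 / β).toReal ≠ ∞ :=
    ENNReal.rpow_ne_top_of_nonneg ENNReal.toReal_nonneg hAtop
  have ha2 : A ^ (1 / r) ≠ 0 := (ENNReal.rpow_pos (pos_iff_ne_zero.2 hApos) hAtop).ne'
  have ha2' : A ^ (1 / r) ≠ ∞ := ENNReal.rpow_ne_top_of_nonneg (by positivity) hAtop
  -- auxiliary test function showing W < ∞ and C > 0
  set m : (Fin n → ℝ) → ℝ := fun x => min (ω x)⁻¹ 1 with hmdef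
  have hmmeas : Measurable m := hω.inv.min measurable_const
  have hmpos : ∀ x, 0 < m x := fun x => lt_min (inv_pos.2 (hωpos x)) one_pos
  have hmnorm : eLpNorm m (ENNReal.ofReal r) μ =
      (∫⁻ x, ENNReal.ofReal (m x) ^ r ∂μ) ^ (1/r) :=
    aux_eLpNorm_ofReal_eq μ r hr0 m fun x => (hmpos x).le
  have hmint_meas : Measurable fun x => ENNReal.ofReal (m x) ^ r :=
    (ENNReal.measurable_ofReal.comp hmmeas).pow_const r
  have hmint_pos : 0 < ∫⁻ x, ENNReal.ofReal (m x) ^ r ∂μ := by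
    rw [lintegral_pos_iff_support hmint_meas]
    have : Function.support (fun x => ENNReal.ofReal (m x) ^ r) = univ := by
      ext x
      simp only [Function.mem_support, mem_univ, iff_true]
      exact (ENNReal.rpow_pos (ENNReal.ofReal_pos.2 (hmpos x)) ENNReal.ofReal_ne_top).ne'
    rw [this, hμuniv]
    exact pos_iff_ne_zero.2 hApos
  have hmint_fin : ∫⁻ x, ENNReal.ofReal (m x) ^ r ∂μ ≤ A := by
    calc ∫⁻ x, ENNReal.ofReal (m x) ^ r ∂μ ≤ ∫⁻ _, 1 ∂μ := by
          refine lintegral_mono fun x => ?_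
          calc ENNReal.ofReal (m x) ^ r ≤ (1:ℝ≥0∞) ^ r :=
                ENNReal.rpow_le_rpow (ENNReal.ofReal_le_one.2 (min_le_right _ _)) hr0.le
            _ = 1 := ENNReal.one_rpow r
      _ = A := by rw [lintegral_one, hμuniv]
  have hmnorm_pos : eLpNorm m (ENNReal.ofReal r) μ ≠ 0 := by
    rw [hmnorm]
    exact (ENNReal.rpow_pos hmint_pos (ne_top_of_le_ne_top hAtop hmint_fin)).ne'
  have hmw_fin : eLpNorm (fun x => m x * ω x) (ENNReal.ofReal p) μ ≠ ∞ := by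
    refine ne_top_of_le_ne_top ?_ (eLpNorm_le_of_ae_bound (C := 1) (ae_of_all _ fun x => ?_))
    · exact ENNReal.mul_ne_top
        (ENNReal.rpow_ne_top_of_nonneg (by positivity) (hμuniv ▸ hAtop)) ENNReal.ofReal_ne_top
    · rw [Real.norm_eq_abs, abs_of_nonneg (mul_nonneg (hmpos x).le (hωpos x).le)]
      calc m x * ω x ≤ (ω x)⁻¹ * ω x :=
            mul_le_mul_of_nonneg_right (min_le_left _ _) (hωpos x).le
        _ = 1 := inv_mul_cancel₀ (hωpos x).ne'
  have hWtop : W ≠ ∞ := by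
    intro hWt
    have H := key m hmmeas
    rw [hWt, ENNReal.mul_top (mul_ne_zero (mul_ne_zero ha1 (ENNReal.inv_ne_zero.2 ha2'))
      hmnorm_pos)] at H
    exact (ENNReal.mul_ne_top ENNReal.ofReal_ne_top hmw_fin) (top_le_iff.1 H)
  have hC : ENNReal.ofReal C ≠ 0 := by
    intro hC0
    have H := key m hmmeas
    rw [hC0, zero_mul, le_zero_iff] at H
    simp only [mul_eq_zero] at H
    rcases H with ((h' | h') | h') | h'
    · exact ha1 h'
    · exact ENNReal.inv_ne_zero.2 ha2' h'
    · exact hmnorm_pos h'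
    · exact hW0 h'
  rcases eq_or_ne t ∞ with htop | htop
  · -- case t = ∞, so r = p
    have hrp' : r = p := by
      have h3 : (0:ℝ) = 1 / r - 1 / p := by
        simpa [htop] using hT
      have h4 : 1 / r = 1 / p := by linarith
      have := (div_eq_div_iff hr0.ne' hp0.ne').1 h4
      linarith
    rw [htop, eLpNorm_exponent_top]
    set F : (Fin n → ℝ) → ℝ≥0∞ := fun x => ENNReal.ofReal (ω x)⁻¹ with hFdef
    have hFmeas : Measurable F := ENNReal.measurable_ofReal.comp hω.inv
    have hMF : eLpNormEssSup (fun x => (ω x)⁻¹) μ = essSup F μ := by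
      have e0 : (fun x => ‖(ω x)⁻¹‖ₑ) = F :=
        funext fun x => Real.enorm_eq_ofReal (inv_pos.2 (hωpos x)).le
      rw [eLpNormEssSup, e0]
    rw [hMF]
    set M := essSup F μ with hMdef
    set Z := ENNReal.ofReal C * A ^ (1/u).toReal / W with hZdef
    have hWZ : W * Z = ENNReal.ofReal C * A ^ (1/u).toReal :=
      ENNReal.mul_div_cancel hW0 hWtop
    suffices hMZ : M ≤ Z by
      exact le_trans (mul_le_mul_right hMZ W) (le_of_eq hWZ)
    by_contra hMZ
    push_neg at hMZ
    obtain ⟨lam, hZlam, hlamM⟩ := exists_between hMZ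
    have hlam0 : lam ≠ 0 := ((zero_le (a := Z)).trans_lt hZlam).ne'
    have hlamtop : lam ≠ ∞ := hlamM.ne_top
    set E := {x | lam < F x} with hEdef
    have hEm : MeasurableSet E := measurableSet_lt measurable_const hFmeas
    have hEpos : μ E ≠ 0 := by
      intro hE0
      have hae : ∀ᵐ x ∂μ, F x ≤ lam := by
        rw [ae_iff]
        have e1 : {x | ¬ F x ≤ lam} = E := by
          ext x; simp [hEdef, not_le]
        rw [e1]
        exact hE0
      have hle : M ≤ lam := essSup_le_of_ae_le lam hae
      exact absurd hlamM (not_lt.2 hle)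
    have hEA : μ E ≤ A := hμuniv ▸ measure_mono (subset_univ E)
    have hEtop : μ E ≠ ∞ := ne_top_of_le_ne_top hAtop hEA
    set g : (Fin n → ℝ) → ℝ := E.indicator fun _ => 1 with hgdef
    have H := key g (measurable_const.indicator hEm)
    have hgr : eLpNorm g (ENNReal.ofReal r) μ = μ E ^ (1/r : ℝ) := by
      rw [hgdef, eLpNorm_indicator_const hEm hRpos.ne' ENNReal.ofReal_ne_top,
        ENNReal.toReal_ofReal hr0.le]
      simp
    have hgp : eLpNorm (fun x => g x * ω x) (ENNReal.ofReal p) μ ≤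
        lam⁻¹ * μ E ^ (1/p : ℝ) := by
      have e2 : (fun x => g x * ω x) = E.indicator ω := by
        funext x
        by_cases hx : x ∈ E
        · simp [hgdef, Set.indicator_of_mem hx]
        · simp [hgdef, Set.indicator_of_notMem hx]
      rw [e2, aux_eLpNorm_ofReal_eq μ p hp0 _
        (fun x => Set.indicator_nonneg (fun y _ => (hωpos y).le) x)]
      calc (∫⁻ x, ENNReal.ofReal (E.indicator ω x) ^ p ∂μ) ^ (1/p)
          ≤ (∫⁻ x, E.indicator (fun _ => lam⁻¹ ^ p) x ∂μ) ^ (1/p) := by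
            refine ENNReal.rpow_le_rpow (lintegral_mono fun x => ?_) (by positivity)
            by_cases hx : x ∈ E
            · rw [Set.indicator_of_mem hx, Set.indicator_of_mem hx]
              refine ENNReal.rpow_le_rpow ?_ hp0.le
              have hxE : lam < F x := hx
              have hFx : ENNReal.ofReal (ω x) = (F x)⁻¹ := by
                show ENNReal.ofReal (ω x) = (ENNReal.ofReal (ω x)⁻¹)⁻¹
                rw [ENNReal.ofReal_inv_of_pos (hωpos x), inv_inv]
              rw [hFx]
              exact ENNReal.inv_le_inv.2 hxE.le
            · rw [Set.indicator_of_notMem hx, Set.indicator_of_notMem hx,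
                ENNReal.ofReal_zero, ENNReal.zero_rpow_of_pos hp0]
        _ = (lam⁻¹ ^ p * μ E) ^ (1/p : ℝ) := by rw [lintegral_indicator_const hEm]
        _ = lam⁻¹ * μ E ^ (1/p : ℝ) := by
            rw [ENNReal.mul_rpow_of_nonneg _ _ (by positivity), ← ENNReal.rpow_mul,
              mul_one_div, div_self hp0.ne', ENNReal.rpow_one]
    rw [hgr] at H
    have H2 : A ^ (1 / β).toReal * (A ^ (1 / r))⁻¹ * μ E ^ (1/r : ℝ) * W ≤
        (ENNReal.ofReal C * lam⁻¹) * μ E ^ (1/r : ℝ) := by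
      refine H.trans ?_
      rw [hrp']
      calc ENNReal.ofReal C * eLpNorm (fun x => g x * ω x) (ENNReal.ofReal p) μ
          ≤ ENNReal.ofReal C * (lam⁻¹ * μ E ^ (1/p : ℝ)) := mul_le_mul_right hgp _
        _ = (ENNReal.ofReal C * lam⁻¹) * μ E ^ (1/p : ℝ) := by ring
    have H3 := aux_cancel hApos hAtop
      ((ENNReal.rpow_pos (pos_iff_ne_zero.2 hEpos) hEtop).ne')
      (ENNReal.rpow_ne_top_of_nonneg (by positivity) hEtop) H2
    have H4 : W * lam ≤ ENNReal.ofReal C * A ^ (1/u).toReal := by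
      calc W * lam ≤ ENNReal.ofReal C * lam⁻¹ * A ^ (1/r - (1 / β).toReal) * lam :=
            mul_le_mul_left H3 lam
        _ = ENNReal.ofReal C * A ^ (1/r - (1 / β).toReal) * (lam⁻¹ * lam) := by ring
        _ = ENNReal.ofReal C * A ^ (1/u).toReal := by
            rw [ENNReal.inv_mul_cancel hlam0 hlamtop, mul_one, hU]
    have hlamZ : lam ≤ Z := by
      rw [hZdef, ENNReal.le_div_iff_mul_le (Or.inl hW0) (Or.inl hWtop)]
      calc lam * W = W * lam := mul_comm _ _
        _ ≤ _ := H4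
    exact absurd hlamZ (not_le.2 hZlam)
  · -- case t ≠ ∞
    have ht0 : t ≠ 0 := by
      intro h0; rw [h0] at htfin'; simp at htfin'
    set τ := t.toReal with hτdef
    have hτpos : 0 < τ := ENNReal.toReal_pos ht0 htop
    have hτT : 1/τ = 1/r - 1/p := by
      rw [← hT, one_div, one_div, ENNReal.toReal_inv]
    have h5 : τ * (1/r - 1/p) = 1 := by
      rw [← hτT]; field_simp
    set a := τ / r with hadef
    have har : a * r = τ := by rw [hadef]; field_simp
    have hap : (a - 1) * p = τ := by
      rw [hadef]
      have h6 : τ * (p - r) = r * p := by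
        have h7 := h5
        field_simp at h7
        nlinarith [h7]
      field_simp
      nlinarith [h6]
    set J : ℕ → ℝ≥0∞ := fun N => ∫⁻ x, ENNReal.ofReal (min (ω x)⁻¹ N) ^ τ ∂μ with hJdef
    have hJmeas : ∀ N : ℕ, Measurable fun x => ENNReal.ofReal (min (ω x)⁻¹ N) ^ τ :=
      fun N => (ENNReal.measurable_ofReal.comp (hω.inv.min measurable_const)).pow_const τ
    have claim : ∀ N : ℕ, W * (J N) ^ (1/τ) ≤ ENNReal.ofReal C * A ^ (1/u).toReal := by
      intro N
      rcases eq_or_ne (J N) 0 with hJ0 | hJ0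
      · rw [hJ0, ENNReal.zero_rpow_of_pos (by positivity), mul_zero]; exact zero_le
      set mN : (Fin n → ℝ) → ℝ := fun x => min (ω x)⁻¹ N with hmN
      have hmNmeas : Measurable mN := hω.inv.min measurable_const
      have hmNnn : ∀ x, 0 ≤ mN x := fun x =>
        le_min (inv_pos.2 (hωpos x)).le (Nat.cast_nonneg N)
      set g : (Fin n → ℝ) → ℝ := fun x => mN x ^ a with hg
      have hgmeas : Measurable g := hmNmeas.pow_const a
      have hgnn : ∀ x, 0 ≤ g x := fun x => Real.rpow_nonneg (hmNnn x) a
      have hgr : eLpNorm g (ENNReal.ofReal r) μ = (J N) ^ (1/r : ℝ) := by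
        rw [aux_eLpNorm_ofReal_eq μ r hr0 g hgnn, hJdef]
        congr 1
        apply lintegral_congr
        intro x
        show ENNReal.ofReal (mN x ^ a) ^ r = ENNReal.ofReal (mN x) ^ τ
        rcases (hmNnn x).eq_or_lt with h0 | h0
        · rw [← h0, Real.zero_rpow (ne_of_gt (by positivity)), ENNReal.ofReal_zero,
            ENNReal.zero_rpow_of_pos hr0, ENNReal.zero_rpow_of_pos hτpos]
        · rw [← ENNReal.ofReal_rpow_of_pos h0, ← ENNReal.rpow_mul, har]
      have hgp : eLpNorm (fun x => g x * ω x) (ENNReal.ofReal p) μ ≤ (J N) ^ (1/p : ℝ) := by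
        rw [aux_eLpNorm_ofReal_eq μ p hp0 _ fun x => mul_nonneg (hgnn x) (hωpos x).le]
        refine ENNReal.rpow_le_rpow (lintegral_mono fun x => ?_) (by positivity)
        rcases (hmNnn x).eq_or_lt with h0 | h0
        · have hgx : g x = 0 := by
            show mN x ^ a = 0
            rw [← h0, Real.zero_rpow (ne_of_gt (by positivity))]
          rw [hgx, zero_mul, ENNReal.ofReal_zero, ENNReal.zero_rpow_of_pos hp0]
          exact zero_le
        · have hb : g x * ω x ≤ mN x ^ (a - 1) := by
            have hω' : ω x ≤ (mN x)⁻¹ := by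
              have h1 : mN x ≤ (ω x)⁻¹ := min_le_left _ _
              calc ω x = ((ω x)⁻¹)⁻¹ := (inv_inv _).symm
                _ ≤ (mN x)⁻¹ := by
                    apply inv_anti₀ h0 h1
            calc g x * ω x ≤ g x * (mN x)⁻¹ :=
                  mul_le_mul_of_nonneg_left hω' (hgnn x)
              _ = mN x ^ (a - 1) := by
                  show mN x ^ a * (mN x)⁻¹ = _
                  rw [← Real.rpow_neg_one (mN x), ← Real.rpow_add h0, ← sub_eq_add_neg]
          calc ENNReal.ofReal (g x * ω x) ^ p ≤ ENNReal.ofReal (mN x ^ (a-1)) ^ p :=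
                ENNReal.rpow_le_rpow (ENNReal.ofReal_le_ofReal hb) hp0.le
            _ = ENNReal.ofReal (mN x) ^ τ := by
                rw [← ENNReal.ofReal_rpow_of_pos h0, ← ENNReal.rpow_mul, hap]
      have hJtop : J N ≠ ∞ := by
        have hle : J N ≤ ENNReal.ofReal (N:ℝ) ^ τ * A := by
          calc J N ≤ ∫⁻ _, ENNReal.ofReal (N:ℝ) ^ τ ∂μ :=
              lintegral_mono fun x => ENNReal.rpow_le_rpow
                (ENNReal.ofReal_le_ofReal (min_le_right _ _)) hτpos.le
            _ = ENNReal.ofReal (N:ℝ) ^ τ * A := by rw [lintegral_const, hμuniv]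
        exact ne_top_of_le_ne_top (ENNReal.mul_ne_top
          (ENNReal.rpow_ne_top_of_nonneg hτpos.le ENNReal.ofReal_ne_top) hAtop) hle
      have H := (key g hgmeas).trans (mul_le_mul_right hgp _)
      rw [hgr] at H
      have hsplit : (J N) ^ (1/r : ℝ) = (J N) ^ (1/p : ℝ) * (J N) ^ (1/r - 1/p : ℝ) := by
        rw [← ENNReal.rpow_add _ _ hJ0 hJtop]
        congr 1; ring
      have H2 : A ^ (1 / β).toReal * (A ^ (1 / r))⁻¹ * (J N) ^ (1/p : ℝ) *
          ((J N) ^ (1/r - 1/p : ℝ) * W) ≤ ENNReal.ofReal C * (J N) ^ (1/p : ℝ) := by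
        calc A ^ (1 / β).toReal * (A ^ (1 / r))⁻¹ * (J N) ^ (1/p : ℝ) *
            ((J N) ^ (1/r - 1/p : ℝ) * W)
            = A ^ (1 / β).toReal * (A ^ (1 / r))⁻¹ *
              ((J N) ^ (1/p : ℝ) * (J N) ^ (1/r - 1/p : ℝ)) * W := by ring
          _ = A ^ (1 / β).toReal * (A ^ (1 / r))⁻¹ * (J N) ^ (1/r : ℝ) * W := by
              rw [← hsplit]
          _ ≤ ENNReal.ofReal C * (J N) ^ (1/p : ℝ) := H
      have H3 := aux_cancel hApos hAtop
        ((ENNReal.rpow_pos (pos_iff_ne_zero.2 hJ0) hJtop).ne')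
        (ENNReal.rpow_ne_top_of_nonneg (by positivity) hJtop) H2
      calc W * (J N) ^ (1/τ) = (J N) ^ (1/r - 1/p : ℝ) * W := by rw [hτT]; ring
        _ ≤ ENNReal.ofReal C * A ^ (1/r - (1 / β).toReal) := H3
        _ = ENNReal.ofReal C * A ^ (1/u).toReal := by rw [hU]
    -- pass to the supremum
    have hnorm : eLpNorm (fun x => (ω x)⁻¹) t μ =
        (∫⁻ x, ENNReal.ofReal ((ω x)⁻¹) ^ τ ∂μ) ^ (1/τ) := by
      rw [eLpNorm_eq_lintegral_rpow_enorm_toReal ht0 htop]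
      congr 1
      apply lintegral_congr
      intro x
      rw [Real.enorm_eq_ofReal (inv_pos.2 (hωpos x)).le]
    have hmono : Monotone fun (N : ℕ) (x : Fin n → ℝ) =>
        ENNReal.ofReal (min (ω x)⁻¹ N) ^ τ := by
      intro N M hNM x
      exact ENNReal.rpow_le_rpow (ENNReal.ofReal_le_ofReal
        (min_le_min le_rfl (Nat.cast_le.2 hNM))) hτpos.le
    have hsup : (∫⁻ x, ENNReal.ofReal ((ω x)⁻¹) ^ τ ∂μ) = ⨆ N, J N := by
      rw [hJdef, ← lintegral_iSup hJmeas hmono]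
      apply lintegral_congr
      intro x
      exact (aux_iSup_min _ τ hτpos.le).symm
    rw [hnorm, hsup, aux_iSup_rpow _ _ (by positivity), ENNReal.mul_iSup]
    exact iSup_le claim
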